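/- arXiv:2408.09299 — 3 statements merged into one kernel-verified Lean document; each statement's English description precedes it below -/
import Mathlib

section
/- Let (Γ, α) be an abstract GKM graph of valence at least 4 that admits a quaternionic structure. Then Γ is not GKM₄; more precisely, at every vertex v there are four pairwise distinct edges in E_v whose labels are linearly dependent over ℚ. -/
namespace GKMQ

/-- `x` equals `y` up to sign (`x` is a "lift" of the class of `y` mod sign). -/
def PM {m : ℕ} (x y : Fin m → ℤ) : Prop := x = y ∨ x = -y

/-- coefficientwise coercion of an integer vector to `ℚ`. -/
def ratQ {m : ℕ} (x : Fin m → ℤ) : Fin m → ℚ := fun i => (x i : ℚ)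

/-- An abstract graph: finite vertex and oriented-edge sets, a fixed-point-free
orientation-reversal involution `bar`, no loops; multiple edges are allowed. -/
structure Graph where
  V : Type
  E : Type
  fintypeV : Fintype V
  fintypeE : Fintype E
  src : E → V
  bar : E → E
  bar_invol : ∀ e, bar (bar e) = e
  bar_ne : ∀ e, bar e ≠ e
  no_loop : ∀ e, src (bar e) ≠ src e

/-- The terminal vertex of an oriented edge. -/
def Graph.tgt (G : Graph) (e : G.E) : G.V := G.src (G.bar e)

/-- A connection on a graph; `map e` is a bijection `E_{i(e)} → E_{t(e)}` with
`∇_e e = ē` and `∇_{ē} = (∇_e)⁻¹` (its values outside `E_{i(e)}` are irrelevant). -/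
structure Connection (G : Graph) where
  map : G.E → G.E → G.E
  map_src : ∀ e f, G.src f = G.src e → G.src (map e f) = G.tgt e
  map_self : ∀ e, map e e = G.bar e
  map_bar : ∀ e f, G.src f = G.src e → map (G.bar e) (map e f) = f

/-- Compatibility of a connection with an edge labeling (mod sign): for every edge `e`
and `f ∈ E_{i(e)}` there are lifts of the labels of `f` and `∇_e f` differing by an
integer multiple of the label of `e`. -/
def CompatibleConn (G : Graph) {m : ℕ} (label : G.E → (Fin m → ℤ)) (C : Connection G) :
    Prop :=
  ∀ e f, G.src f = G.src e →
    ∃ x y : Fin m → ℤ, PM x (label f) ∧ PM y (label (C.map e f)) ∧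
      ∃ c : ℤ, y = x + c • label e

/-- An axial function with values in `ℤ^m` modulo sign; `label` is a choice of
representatives, so that all labels are well defined up to sign. -/
structure Axial (G : Graph) (m : ℕ) where
  label : G.E → (Fin m → ℤ)
  label_bar : ∀ e, PM (label (G.bar e)) (label e)
  indep₂ : ∀ e f, G.src f = G.src e → e ≠ f →
    LinearIndependent ℚ ![ratQ (label e), ratQ (label f)]
  exists_compat : ∃ C : Connection G, CompatibleConn G label C

/-- The GKM_k condition: at every vertex, any `k` of the labels are linearly
independent over `ℚ`. -/
def Axial.IsGKM {G : Graph} {m : ℕ} (A : Axial G m) (k : ℕ) : Prop :=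
  ∀ v : G.V, ∀ s : Finset G.E, (∀ e ∈ s, G.src e = v) → s.card = k →
    LinearIndependent ℚ (fun e : {x // x ∈ s} => ratQ (A.label e.1))

/-- A full quaternionically compatible family of lifts at a vertex `v`: `L` assigns to
every edge at `v` a lift of its label, `ℓ` is a lift of the quaternionic weight, and the
lifts of each quaternionic pair sum to `ℓ`. -/
def QFam (G : Graph) {m : ℕ} (label : G.E → (Fin m → ℤ)) (lam : G.V → (Fin m → ℤ))
    (qpair : G.E → G.E) (v : G.V) (L : G.E → (Fin m → ℤ)) (ℓ : Fin m → ℤ) : Prop :=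
  PM ℓ (lam v) ∧ ∀ e, G.src e = v → PM (L e) (label e) ∧ L e + L (qpair e) = ℓ

/-- A partial family `s` of lifts, together with a lift `ℓ` of the quaternionic weight
at `v`, is quaternionically compatible if it extends to a full family. -/
def QCompat (G : Graph) {m : ℕ} (label : G.E → (Fin m → ℤ)) (lam : G.V → (Fin m → ℤ))
    (qpair : G.E → G.E) (v : G.V) (s : List (G.E × (Fin m → ℤ))) (ℓ : Fin m → ℤ) :
    Prop :=
  ∃ L, QFam G label lam qpair v L ℓ ∧ ∀ p ∈ s, L p.1 = p.2

/-- Condition (2) in the definition of a quaternionic structure on a GKM graph. -/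
def QuatCondTwo (G : Graph) {m : ℕ} (label : G.E → (Fin m → ℤ))
    (lam : G.V → (Fin m → ℤ)) (qpair : G.E → G.E) : Prop :=
  ∃ C : Connection G, CompatibleConn G label C ∧
    (∀ e f, G.src f = G.src e → C.map e (qpair f) = qpair (C.map e f)) ∧
    ∀ e xe lv, QCompat G label lam qpair (G.src e) [(e, xe)] lv →
      ∃ lw, (∃ c : ℤ, lw = lv + c • label e) ∧
        QCompat G label lam qpair (G.tgt e) [(G.bar e, -xe)] lw ∧
        ∀ f, G.src f = G.src e → ∀ xf,
          QCompat G label lam qpair (G.src e) [(e, xe), (f, xf)] lv →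
          ∀ y, PM y (label (C.map e f)) → (∃ c : ℤ, y = xf + c • label e) →
            QCompat G label lam qpair (G.tgt e) [(G.bar e, -xe), (C.map e f, y)] lw

/-- A quaternionic structure on an abstract GKM graph: a quaternionic weight (mod sign)
at every vertex, and a grouping of the edges at each vertex into quaternionic pairs,
subject to conditions (1) (`pair_sum`) and (2) (`cond₂`). -/
structure QuatStructure (G : Graph) {m : ℕ} (A : Axial G m) where
  lam : G.V → (Fin m → ℤ)
  qpair : G.E → G.E
  qpair_src : ∀ e, G.src (qpair e) = G.src e
  qpair_ne : ∀ e, qpair e ≠ e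
  qpair_invol : ∀ e, qpair (qpair e) = e
  pair_sum : ∀ e, ∃ x y : Fin m → ℤ, PM x (A.label e) ∧ PM y (A.label (qpair e)) ∧
    PM (x + y) (lam (G.src e))
  cond₂ : QuatCondTwo G A.label lam qpair

/-- Auxiliary function: consecutive pairs of edges of a connection path. -/
def connAux (G : Graph) (C : Connection G) (e₁ e₂ : G.E) : ℕ → G.E × G.E
  | 0 => (e₁, e₂)
  | n + 1 =>
    let p := connAux G C e₁ e₂ n
    (p.2, C.map p.2 (G.bar p.1))

/-- The connection path with prescribed first two edges `e₁, e₂` (where `t(e₁) = i(e₂)`):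
`g 0 = e₁`, `g 1 = e₂`, `g (k+2) = ∇_{g (k+1)} (bar (g k))`. -/
def connPathFrom (G : Graph) (C : Connection G) (e₁ e₂ : G.E) (k : ℕ) : G.E :=
  (connAux G C e₁ e₂ k).1

/-- The connection path through two edges `e, f` starting at the same vertex:
`g 0 = e`, `g 1 = ∇_e f`, `g (k+2) = ∇_{g (k+1)} (bar (g k))`. -/
def connPath (G : Graph) (C : Connection G) (e f : G.E) : ℕ → G.E :=
  connPathFrom G C e (C.map e f)

def IsPeriod {α : Type*} (g : ℕ → α) (N : ℕ) : Prop := 0 < N ∧ ∀ k, g (k + N) = g k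

/-- `N` is the minimal period of the sequence `g`. -/
def MinPeriod {α : Type*} (g : ℕ → α) (N : ℕ) : Prop :=
  IsPeriod g N ∧ ∀ N', IsPeriod g N' → N ≤ N'

/-- A 2-face (given by its connection path `g`) is quaternionic if at each of its
vertices the two edges of the face based there form a quaternionic pair. -/
def IsQuatPath (G : Graph) {m : ℕ} {A : Axial G m} (Q : QuatStructure G A)
    (g : ℕ → G.E) : Prop :=
  ∀ k, Q.qpair (g (k + 1)) = G.bar (g k)

/-- A noncomplex triangle: a quaternionic 2-face which is a triangle with labels
`±a, ±λ, ±(λ-a)` and quaternionic weights `±λ, ±(λ-a), ±a` at its three vertices. -/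
def IsNoncomplexTriangle (G : Graph) {m : ℕ} {A : Axial G m} (Q : QuatStructure G A)
    (g : ℕ → G.E) : Prop :=
  MinPeriod g 3 ∧ IsQuatPath G Q g ∧
  ∃ a l : Fin m → ℤ,
    PM (A.label (g 0)) a ∧ PM (A.label (g 1)) l ∧ PM (A.label (g 2)) (l - a) ∧
    PM (Q.lam (G.src (g 0))) l ∧ PM (Q.lam (G.src (g 1))) (l - a) ∧
    PM (Q.lam (G.src (g 2))) a

/-- Hypothesis (H): a GKM₃ graph with quaternionic structure all of whose quaternionic
2-faces are biangles or noncomplex triangles and all of whose complex 2-faces are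
triangles or quadrangles. -/
def HypH (G : Graph) {m : ℕ} (A : Axial G m) (Q : QuatStructure G A) : Prop :=
  A.IsGKM 3 ∧
  ∀ C : Connection G, CompatibleConn G A.label C →
    ∀ e f, G.src f = G.src e → f ≠ e →
      ∀ N, MinPeriod (connPath G C e f) N →
        (IsQuatPath G Q (connPath G C e f) →
          N = 2 ∨ IsNoncomplexTriangle G Q (connPath G C e f)) ∧
        (¬ IsQuatPath G Q (connPath G C e f) → N = 3 ∨ N = 4)

/-- A compatible signed structure on a 2-face with edges `g 0, …, g (N-1)`
(indices mod `N`): lifts `γ k` of the labels `α (g k)` such that consecutive lifts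
satisfy the connection congruence and are quaternionically compatible at each vertex. -/
def SignedStructureOn (G : Graph) {m : ℕ} (A : Axial G m) (Q : QuatStructure G A)
    (g : ℕ → G.E) (N : ℕ) (γ : ℕ → (Fin m → ℤ)) : Prop :=
  (∀ k, γ (k + N) = γ k) ∧
  (∀ k, PM (γ k) (A.label (g k))) ∧
  (∀ k, ∃ c : ℤ, γ (k + 2) + γ k = c • γ (k + 1)) ∧
  (∀ k, ∃ ℓ, QCompat G A.label Q.lam Q.qpair (G.tgt (g k))
      [(G.bar (g k), -(γ k)), (g (k + 1), γ (k + 1))] ℓ)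

/-- The raw data of a GKM graph with quaternionic structure: vertices, oriented edges,
labels, quaternionic weights (both as chosen representatives mod sign) and quaternionic
pairs. -/
structure QData (m : ℕ) where
  V : Type
  E : Type
  src : E → V
  bar : E → E
  label : E → (Fin m → ℤ)
  lam : V → (Fin m → ℤ)
  qpair : E → E

/-- The quaternionic GKM data underlying a GKM graph with quaternionic structure. -/
def toQData (G : Graph) {m : ℕ} (A : Axial G m) (Q : QuatStructure G A) : QData m :=
  ⟨G.V, G.E, G.src, G.bar, A.label, Q.lam, Q.qpair⟩

/-- An isomorphism of GKM graphs with quaternionic structure: bijections of vertices and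
oriented edges commuting with `src`, `bar` and the quaternionic pairing, and preserving
the labels and the quaternionic weights up to sign. -/
structure QIso {m : ℕ} (D₁ D₂ : QData m) where
  vmap : D₁.V ≃ D₂.V
  emap : D₁.E ≃ D₂.E
  src_comm : ∀ e, D₂.src (emap e) = vmap (D₁.src e)
  bar_comm : ∀ e, D₂.bar (emap e) = emap (D₁.bar e)
  label_pm : ∀ e, PM (D₂.label (emap e)) (D₁.label e)
  lam_pm : ∀ v, PM (D₂.lam (vmap v)) (D₁.lam v)
  qpair_comm : ∀ e, D₂.qpair (emap e) = emap (D₁.qpair e)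

/-- The model graph `Γ_{ℍP}(λ; β₀, …, β_n)` of a torus action on `ℍPⁿ`: vertices
`0, …, n`, two edges between any two distinct vertices `k, l`, labeled
`±(β_k - β_l)` and `±(λ - β_k - β_l)`, quaternionic weight `±(λ - 2β_k)` at `k`,
the two edges of each biangle forming a quaternionic pair. -/
def modelHP (n : ℕ) {m : ℕ} (lam₀ : Fin m → ℤ) (β : Fin (n + 1) → (Fin m → ℤ)) :
    QData m where
  V := Fin (n + 1)
  E := {p : Fin (n + 1) × Fin (n + 1) // p.1 ≠ p.2} × Bool
  src e := e.1.1.1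
  bar e := (⟨(e.1.1.2, e.1.1.1), Ne.symm e.1.2⟩, e.2)
  label e := if e.2 then lam₀ - β e.1.1.1 - β e.1.1.2 else β e.1.1.1 - β e.1.1.2
  lam k := lam₀ - (2 : ℤ) • β k
  qpair e := (e.1, !e.2)

/-- The 2-element subset `{i, j}` (`i ≠ j`) realized as a sorted pair. -/
def uPair {n : ℕ} (i j : Fin n) (h : i ≠ j) : {p : Fin n × Fin n // p.1 < p.2} :=
  if hlt : i < j then ⟨(i, j), hlt⟩ else ⟨(j, i), h.lt_or_gt.resolve_left hlt⟩

/-- The model graph `Γ_{Gr}(β₁, …, β_n)` of a torus action on `Gr₂(ℂⁿ)`: vertices the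
2-element subsets of `{1, …, n}`; an oriented edge `(i, j, k)` from `{i, j}` to `{i, k}`
for `j ≠ k`, labeled `±(β_j - β_k)`; quaternionic weight `±(β_i - β_j)` at `{i, j}`;
the edges `(i, j, k)` and `(j, i, k)` forming a quaternionic pair at `{i, j}`. -/
def modelGr (n : ℕ) {m : ℕ} (β : Fin n → (Fin m → ℤ)) : QData m where
  V := {p : Fin n × Fin n // p.1 < p.2}
  E := {t : Fin n × Fin n × Fin n // t.1 ≠ t.2.1 ∧ t.1 ≠ t.2.2 ∧ t.2.1 ≠ t.2.2}
  src e := uPair e.1.1 e.1.2.1 e.2.1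
  bar e := ⟨(e.1.1, e.1.2.2, e.1.2.1), e.2.2.1, e.2.1, Ne.symm e.2.2.2⟩
  label e := β e.1.2.1 - β e.1.2.2
  lam v := β v.1.1 - β v.1.2
  qpair e := ⟨(e.1.2.1, e.1.1, e.1.2.2), Ne.symm e.2.1, e.2.2.2, e.2.2.1⟩

/-- A subgraph (with quaternionic structure) of a GKM graph with quaternionic
structure: sets of vertices and of oriented edges closed under `src`, `bar` and the
quaternionic pairing. -/
structure SubData (G : Graph) {m : ℕ} (A : Axial G m) (Q : QuatStructure G A) where
  W : Set G.V
  F : Set G.E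
  src_mem : ∀ e ∈ F, G.src e ∈ W
  bar_mem : ∀ e ∈ F, G.bar e ∈ F
  qpair_mem : ∀ e ∈ F, Q.qpair e ∈ F

/-- The quaternionic GKM data induced on a subgraph. -/
def SubData.toQData {G : Graph} {m : ℕ} {A : Axial G m} {Q : QuatStructure G A}
    (S : SubData G A Q) : QData m where
  V := S.W
  E := S.F
  src e := ⟨G.src e.1, S.src_mem e.1 e.2⟩
  bar e := ⟨G.bar e.1, S.bar_mem e.1 e.2⟩
  label e := A.label e.1
  lam v := Q.lam v.1
  qpair e := ⟨Q.qpair e.1, S.qpair_mem e.1 e.2⟩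

lemma pm_ratQ {m : ℕ} {x y : Fin m → ℤ} (h : PM x y) :
    ∃ ε : ℚ, (ε = 1 ∨ ε = -1) ∧ ratQ x = ε • ratQ y := by
  rcases h with h | h
  · exact ⟨1, Or.inl rfl, by subst h; funext i; simp [ratQ]⟩
  · exact ⟨-1, Or.inr rfl, by subst h; funext i; simp [ratQ]⟩

lemma ratQ_add {m : ℕ} (x y : Fin m → ℤ) : ratQ (x + y) = ratQ x + ratQ y := by
  funext i; simp [ratQ]

/-- An abstract GKM graph of valence at least 4 with a quaternionic structure is never
GKM₄: at every vertex there are four distinct edges with linearly dependent labels. -/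
theorem not_GKM4 (G : Graph) {m : ℕ} (A : Axial G m) (Q : QuatStructure G A)
    (hval : ∀ v : G.V, 4 ≤ {e : G.E | G.src e = v}.ncard) :
    ∀ v : G.V, ∃ e₁ e₂ e₃ e₄ : G.E,
      G.src e₁ = v ∧ G.src e₂ = v ∧ G.src e₃ = v ∧ G.src e₄ = v ∧
      e₁ ≠ e₂ ∧ e₁ ≠ e₃ ∧ e₁ ≠ e₄ ∧ e₂ ≠ e₃ ∧ e₂ ≠ e₄ ∧ e₃ ≠ e₄ ∧
      ¬ LinearIndependent ℚ
        ![ratQ (A.label e₁), ratQ (A.label e₂), ratQ (A.label e₃), ratQ (A.label e₄)] := by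

  intro v
  classical
  have hS : 4 ≤ {e : G.E | G.src e = v}.ncard := hval v
  obtain ⟨e₁, he₁⟩ : ∃ e, G.src e = v := by
    obtain ⟨e, he⟩ := Set.nonempty_of_ncard_ne_zero
      (s := {e : G.E | G.src e = v}) (by omega)
    exact ⟨e, he⟩
  set e₂ := Q.qpair e₁ with he₂def
  have he₂ : G.src e₂ = v := by rw [he₂def, Q.qpair_src, he₁]
  have h12 : e₁ ≠ e₂ := (Q.qpair_ne e₁).symm
  have hdiff : ({e : G.E | G.src e = v} \ {e₁, e₂}).Nonempty := by
    by_contra h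
    rw [Set.not_nonempty_iff_eq_empty, Set.diff_eq_empty] at h
    have h1 := Set.ncard_le_ncard h (Set.toFinite _)
    have h2 : ({e₁, e₂} : Set G.E).ncard ≤ 2 := by
      calc ({e₁, e₂} : Set G.E).ncard ≤ ({e₂} : Set G.E).ncard + 1 :=
            Set.ncard_insert_le _ _
        _ ≤ 2 := by simp [Set.ncard_singleton]
    omega
  obtain ⟨e₃, he₃S, he₃ne⟩ := hdiff
  have he₃ : G.src e₃ = v := he₃S
  have h31 : e₃ ≠ e₁ := by intro h; exact he₃ne (by simp [h])
  have h32 : e₃ ≠ e₂ := by intro h; exact he₃ne (by simp [h])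
  set e₄ := Q.qpair e₃ with he₄def
  have he₄ : G.src e₄ = v := by rw [he₄def, Q.qpair_src, he₃]
  have h34 : e₃ ≠ e₄ := (Q.qpair_ne e₃).symm
  have h14 : e₁ ≠ e₄ := by
    intro h
    have h' : Q.qpair e₁ = Q.qpair e₄ := congrArg _ h
    rw [he₄def, Q.qpair_invol] at h'
    exact h32 h'.symm
  have h24 : e₂ ≠ e₄ := by
    intro h
    have h' : Q.qpair e₂ = Q.qpair e₄ := congrArg _ h
    rw [he₂def, he₄def, Q.qpair_invol, Q.qpair_invol] at h'
    exact h31 h'.symm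
  obtain ⟨x, y, hx, hy, hxy⟩ := Q.pair_sum e₁
  obtain ⟨x', y', hx', hy', hxy'⟩ := Q.pair_sum e₃
  rw [he₁] at hxy
  rw [he₃] at hxy'
  obtain ⟨ε₁, hs₁, hε₁⟩ := pm_ratQ hx
  obtain ⟨ε₂, hs₂, hε₂⟩ := pm_ratQ hy
  obtain ⟨ε₃, hs₃, hε₃⟩ := pm_ratQ hx'
  obtain ⟨ε₄, hs₄, hε₄⟩ := pm_ratQ hy'
  obtain ⟨εa, hsa, hεa⟩ := pm_ratQ hxy
  obtain ⟨εb, hsb, hεb⟩ := pm_ratQ hxy'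
  refine ⟨e₁, e₂, e₃, e₄, he₁, he₂, he₃, he₄, h12, Ne.symm h31, h14, Ne.symm h32,
    h24, h34, ?_⟩
  rw [Fintype.not_linearIndependent_iff]
  refine ⟨![ε₁, ε₂, -(εa * εb) * ε₃, -(εa * εb) * ε₄], ?_, ⟨0, by
    simp only [Matrix.cons_val_zero]
    rcases hs₁ with h | h <;> simp [h]⟩⟩
  have hb2 : εb * εb = 1 := by rcases hsb with h | h <;> simp [h]
  rw [Fin.sum_univ_four]
  simp only [Matrix.cons_val_zero, Matrix.cons_val_one, Matrix.head_cons,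
    Matrix.cons_val_two, Matrix.tail_cons, Matrix.cons_val_three]
  rw [mul_smul, mul_smul, ← hε₁, ← hε₂, ← hε₃, ← hε₄]
  have key : ratQ x + ratQ y = εa • ratQ (Q.lam v) := by rw [← ratQ_add]; exact hεa
  have key' : ratQ x' + ratQ y' = εb • ratQ (Q.lam v) := by rw [← ratQ_add]; exact hεb
  calc ratQ x + ratQ y + (-(εa * εb)) • ratQ x' + (-(εa * εb)) • ratQ y'
      = (ratQ x + ratQ y) + (-(εa * εb)) • (ratQ x' + ratQ y') := by
        rw [smul_add]; abel
    _ = εa • ratQ (Q.lam v) + (-(εa * εb)) • (εb • ratQ (Q.lam v)) := by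
        rw [key, key']
    _ = 0 := by
        rw [smul_smul]
        have : -(εa * εb) * εb = -εa := by
          rw [neg_mul, mul_assoc, hb2, mul_one]
        rw [this, neg_smul, add_neg_cancel]

end GKMQ
end

section
/- Let Γ be a triangle, i.e. the graph with three vertices p₁, p₂, p₃, any two of which are joined by exactly one edge, let α be an axial function on Γ with values in ℤ^m modulo sign, and consider any quaternionic structure on (Γ, α). Let ã, b̃ ∈ ℤ^m be quaternionically compatible lifts at p₁ of the labels of the edges p₁p₂ and p₁p₃ respectively, so that λ̃ = ã + b̃ is a lift of λ(p₁). Then exactly one of the following holds: (noncomplex case) the label of the edge p₂p₃ is ±λ̃, and the quaternionic weights are λ(p₂) = ±b̃ and λ(p₃) = ±ã; or (complex case) the label of the edge p₂p₃ is ±(b̃ − ã), and the quaternionic weights are λ(p₂) = ±(b̃ − 2ã) and λ(p₃) = ±(2b̃ − ã). -/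
namespace GKMQ

lemma pm_symm {m : ℕ} {x y : Fin m → ℤ} (h : PM x y) : PM y x := by
  rcases h with h | h
  · exact Or.inl h.symm
  · exact Or.inr (by rw [h, neg_neg])

lemma pm_neg_left {m : ℕ} {x y : Fin m → ℤ} (h : PM x y) : PM (-x) y := by
  rcases h with h | h
  · exact Or.inr (by rw [h])
  · exact Or.inl (by rw [h, neg_neg])

lemma pm_unneg {m : ℕ} {x y : Fin m → ℤ} (h : PM x (-y)) : PM x y := by
  rcases h with h | h
  · exact Or.inr h
  · exact Or.inl (by rw [h, neg_neg])

lemma pm_trans {m : ℕ} {x y z : Fin m → ℤ} (h : PM x y) (h' : PM y z) : PM x z := by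
  rcases h with h | h <;> rcases h' with h' | h'
  · exact Or.inl (h.trans h')
  · exact Or.inr (h.trans h')
  · exact Or.inr (by rw [h, h'])
  · exact Or.inl (by rw [h, h', neg_neg])

lemma pm_pm {m : ℕ} {x y z : Fin m → ℤ} (h : PM x z) (h' : PM y z) :
    x = y ∨ x = -y := by
  rcases h with h | h <;> rcases h' with h' | h'
  · exact Or.inl (h.trans h'.symm)
  · exact Or.inr (by rw [h, h', neg_neg])
  · exact Or.inr (by rw [h, h'])
  · exact Or.inl (by rw [h, h'])

lemma ratQ_neg {m : ℕ} (u : Fin m → ℤ) : ratQ (-u) = -(ratQ u) := by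
  funext i; simp [ratQ]

lemma indep_pm {m : ℕ} {u v a b : Fin m → ℤ}
    (h : LinearIndependent ℚ ![ratQ u, ratQ v]) (ha : PM a u) (hb : PM b v) :
    ∀ s t : ℤ, s • a + t • b = 0 → s = 0 ∧ t = 0 := by
  rw [LinearIndependent.pair_iff] at h
  intro s t hst
  have h1 : (s : ℚ) • ratQ a + (t : ℚ) • ratQ b = 0 := by
    funext i
    have h2 := congrFun hst i
    simp only [Pi.add_apply, Pi.smul_apply, smul_eq_mul, Pi.zero_apply, ratQ] at h2 ⊢
    exact_mod_cast h2
  have key : ∀ s' t' : ℚ, s' • ratQ a + t' • ratQ b = 0 → s' = 0 ∧ t' = 0 := by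
    rcases ha with rfl | rfl <;> rcases hb with rfl | rfl <;> intro s' t' hst'
    · exact h s' t' hst'
    · rw [ratQ_neg, smul_neg, ← neg_smul] at hst'
      have := h s' (-t') hst'; exact ⟨this.1, by simpa using neg_eq_zero.mp this.2⟩
    · rw [ratQ_neg, smul_neg, ← neg_smul] at hst'
      have := h (-s') t' hst'; exact ⟨by simpa using neg_eq_zero.mp this.1, this.2⟩
    · rw [ratQ_neg, ratQ_neg, smul_neg, smul_neg, ← neg_smul, ← neg_smul] at hst'
      have := h (-s') (-t') hst'
      exact ⟨by simpa using neg_eq_zero.mp this.1, by simpa using neg_eq_zero.mp this.2⟩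
  have := key (s : ℚ) (t : ℚ) h1
  exact ⟨by exact_mod_cast this.1, by exact_mod_cast this.2⟩

/-- On a triangle with a quaternionic structure, with quaternionically compatible lifts
`a, b` at the vertex `p₁`, exactly one of the two cases "noncomplex" or "complex"
occurs, with the stated labels and quaternionic weights. -/
theorem triangle_classification (G : Graph) {m : ℕ} (A : Axial G m)
    (Q : QuatStructure G A)
    (p₁ p₂ p₃ : G.V) (h₁₂ : p₁ ≠ p₂) (h₁₃ : p₁ ≠ p₃) (h₂₃ : p₂ ≠ p₃)
    (e₁₂ e₁₃ e₂₃ : G.E)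
    (hs₁ : G.src e₁₂ = p₁) (ht₁ : G.tgt e₁₂ = p₂)
    (hs₂ : G.src e₁₃ = p₁) (ht₂ : G.tgt e₁₃ = p₃)
    (hs₃ : G.src e₂₃ = p₂) (ht₃ : G.tgt e₂₃ = p₃)
    (hV : ∀ u : G.V, u = p₁ ∨ u = p₂ ∨ u = p₃)
    (hE : ∀ h : G.E, h = e₁₂ ∨ h = e₁₃ ∨ h = e₂₃ ∨
        h = G.bar e₁₂ ∨ h = G.bar e₁₃ ∨ h = G.bar e₂₃)
    (a b : Fin m → ℤ)
    (ha : PM a (A.label e₁₂)) (hb : PM b (A.label e₁₃)) (hl : PM (a + b) (Q.lam p₁)) :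
    ((PM (A.label e₂₃) (a + b) ∧ PM (Q.lam p₂) b ∧ PM (Q.lam p₃) a) ∨
     (PM (A.label e₂₃) (b - a) ∧ PM (Q.lam p₂) (b - (2 : ℤ) • a) ∧
        PM (Q.lam p₃) ((2 : ℤ) • b - a))) ∧
    ¬ ((PM (A.label e₂₃) (a + b) ∧ PM (Q.lam p₂) b ∧ PM (Q.lam p₃) a) ∧
       (PM (A.label e₂₃) (b - a) ∧ PM (Q.lam p₂) (b - (2 : ℤ) • a) ∧
        PM (Q.lam p₃) ((2 : ℤ) • b - a))) := by
  classical
  -- basic source/target facts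
  have hsrc13 : G.src e₁₃ = G.src e₁₂ := by rw [hs₁, hs₂]
  have hsrc12 : G.src e₁₂ = G.src e₁₃ := hsrc13.symm
  have hne1213 : e₁₂ ≠ e₁₃ := by
    intro h; exact h₂₃ (by rw [← ht₁, ← ht₂, h])
  have htbar : ∀ e : G.E, G.tgt (G.bar e) = G.src e := fun e => by
    show G.src (G.bar (G.bar e)) = G.src e; rw [G.bar_invol]
  have hsbar12 : G.src (G.bar e₁₂) = p₂ := ht₁
  have hsbar13 : G.src (G.bar e₁₃) = p₃ := ht₂
  have hsbar23 : G.src (G.bar e₂₃) = p₃ := ht₃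
  -- edges at each vertex
  have hatp1 : ∀ h : G.E, G.src h = p₁ → h = e₁₂ ∨ h = e₁₃ := by
    intro h hh
    rcases hE h with rfl | rfl | rfl | rfl | rfl | rfl
    · exact Or.inl rfl
    · exact Or.inr rfl
    · rw [hs₃] at hh; exact absurd hh h₁₂.symm
    · rw [hsbar12] at hh; exact absurd hh h₁₂.symm
    · rw [hsbar13] at hh; exact absurd hh h₁₃.symm
    · rw [hsbar23] at hh; exact absurd hh h₁₃.symm
  have hatp2 : ∀ h : G.E, G.src h = p₂ → h = G.bar e₁₂ ∨ h = e₂₃ := by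
    intro h hh
    rcases hE h with rfl | rfl | rfl | rfl | rfl | rfl
    · rw [hs₁] at hh; exact absurd hh h₁₂
    · rw [hs₂] at hh; exact absurd hh h₁₂
    · exact Or.inr rfl
    · exact Or.inl rfl
    · rw [hsbar13] at hh; exact absurd hh h₂₃.symm
    · rw [hsbar23] at hh; exact absurd hh h₂₃.symm
  have hatp3 : ∀ h : G.E, G.src h = p₃ → h = G.bar e₁₃ ∨ h = G.bar e₂₃ := by
    intro h hh
    rcases hE h with rfl | rfl | rfl | rfl | rfl | rfl
    · rw [hs₁] at hh; exact absurd hh h₁₃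
    · rw [hs₂] at hh; exact absurd hh h₁₃
    · rw [hs₃] at hh; exact absurd hh h₂₃
    · rw [hsbar12] at hh; exact absurd hh h₂₃
    · exact Or.inl rfl
    · exact Or.inr rfl
  -- quaternionic pairs at the three vertices
  have hq12 : Q.qpair e₁₂ = e₁₃ := by
    rcases hatp1 _ (by rw [Q.qpair_src, hs₁]) with h | h
    · exact absurd h (Q.qpair_ne e₁₂)
    · exact h
  have hq13 : Q.qpair e₁₃ = e₁₂ := by rw [← hq12, Q.qpair_invol]
  have hqb12 : Q.qpair (G.bar e₁₂) = e₂₃ := by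
    rcases hatp2 _ (by rw [Q.qpair_src, hsbar12]) with h | h
    · exact absurd h (Q.qpair_ne (G.bar e₁₂))
    · exact h
  have hqb13 : Q.qpair (G.bar e₁₃) = G.bar e₂₃ := by
    rcases hatp3 _ (by rw [Q.qpair_src, hsbar13]) with h | h
    · exact absurd h (Q.qpair_ne (G.bar e₁₃))
    · exact h
  -- the connection from condition (2)
  obtain ⟨C, hC, hCq, hmain⟩ := Q.cond₂
  have hmap1 : C.map e₁₂ e₁₃ = e₂₃ := by
    rcases hatp2 _ (by rw [C.map_src e₁₂ e₁₃ hsrc13, ht₁]) with h | h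
    · exfalso
      have h2 := C.map_bar e₁₂ e₁₃ hsrc13
      rw [h] at h2
      have h3 := C.map_bar e₁₂ e₁₂ rfl
      rw [C.map_self] at h3
      exact hne1213 (h3.symm.trans h2)
    · exact h
  have hmap2 : C.map e₁₃ e₁₂ = G.bar e₂₃ := by
    rcases hatp3 _ (by rw [C.map_src e₁₃ e₁₂ hsrc12, ht₂]) with h | h
    · exfalso
      have h2 := C.map_bar e₁₃ e₁₂ hsrc12
      rw [h] at h2
      have h3 := C.map_bar e₁₃ e₁₃ rfl
      rw [C.map_self] at h3
      exact hne1213 (h2.symm.trans h3)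
    · exact h
  -- the quaternionically compatible family at p₁
  set L₁ : G.E → (Fin m → ℤ) := fun h => if h = e₁₂ then a else if h = e₁₃ then b else 0
    with hL₁def
  have hL12 : L₁ e₁₂ = a := by simp [hL₁def]
  have hL13 : L₁ e₁₃ = b := by simp [hL₁def, (Ne.symm hne1213 : e₁₃ ≠ e₁₂)]
  have hfamp₁ : QFam G A.label Q.lam Q.qpair p₁ L₁ (a + b) := by
    refine ⟨hl, ?_⟩
    intro e he
    rcases hatp1 e he with rfl | rfl
    · rw [hL12, hq12, hL13]; exact ⟨ha, rfl⟩
    · rw [hL13, hq13, hL12]; exact ⟨hb, add_comm b a⟩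
  have hQCp₁ : ∀ s : List (G.E × (Fin m → ℤ)), (∀ p ∈ s, L₁ p.1 = p.2) →
      QCompat G A.label Q.lam Q.qpair p₁ s (a + b) := fun s hs => ⟨L₁, hfamp₁, hs⟩
  -- apply the main condition along e₁₂
  obtain ⟨lw, -, -, hmore⟩ := hmain e₁₂ a (a + b) (by
    rw [hs₁]
    exact hQCp₁ [(e₁₂, a)] (by
      intro p hp; simp only [List.mem_singleton] at hp; rw [hp]; exact hL12))
  -- construct the lift y of the label of e₂₃ at p₂
  obtain ⟨x, y₀, hx, hy₀, c, hc⟩ := hC e₁₂ e₁₃ hsrc13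
  rw [hmap1] at hy₀
  have hxb := pm_pm hx hb
  obtain ⟨y, hyPM, c', hyrel⟩ : ∃ y, PM y (A.label e₂₃) ∧
      ∃ c' : ℤ, y = b + c' • A.label e₁₂ := by
    rcases hxb with h | h
    · exact ⟨y₀, hy₀, c, by rw [hc, h]⟩
    · refine ⟨-y₀, pm_neg_left hy₀, -c, ?_⟩
      rw [hc, h]
      funext i
      simp only [Pi.add_apply, Pi.neg_apply, Pi.smul_apply, smul_eq_mul]
      ring
  obtain ⟨s, hy⟩ : ∃ s : ℤ, y = b + s • a := by
    rcases ha with h | h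
    · exact ⟨c', by rw [hyrel, ← h]⟩
    · refine ⟨-c', ?_⟩
      rw [hyrel]
      have hlab : A.label e₁₂ = -a := by rw [h, neg_neg]
      rw [hlab]
      funext i
      simp only [Pi.add_apply, Pi.neg_apply, Pi.smul_apply, smul_eq_mul]
      ring
  have hQC2 := hmore e₁₃ hsrc13 b (by
      rw [hs₁]
      exact hQCp₁ [(e₁₂, a), (e₁₃, b)] (by
        intro p hp
        simp only [List.mem_cons, List.mem_singleton, List.not_mem_nil, or_false] at hp
        rcases hp with rfl | rfl
        · exact hL12
        · exact hL13))
    y (by rw [hmap1]; exact hyPM) ⟨c', hyrel⟩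
  rw [hmap1] at hQC2
  obtain ⟨L₂, ⟨hlam2, hfam2⟩, hpin2⟩ := hQC2
  have hpa : L₂ (G.bar e₁₂) = -a := hpin2 (G.bar e₁₂, -a) (by simp)
  have hpy : L₂ e₂₃ = y := hpin2 (e₂₃, y) (by simp)
  have hsum2 := (hfam2 (G.bar e₁₂) rfl).2
  rw [hqb12, hpa, hpy] at hsum2
  have hlamp2 : PM lw (Q.lam p₂) := by rw [← ht₁]; exact hlam2
  -- apply the main condition along e₁₃
  obtain ⟨lw', -, -, hmore'⟩ := hmain e₁₃ b (a + b) (by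
    rw [hs₂]
    exact hQCp₁ [(e₁₃, b)] (by
      intro p hp; simp only [List.mem_singleton] at hp; rw [hp]; exact hL13))
  obtain ⟨x', y₀', hx', hy₀', d, hd⟩ := hC e₁₃ e₁₂ hsrc12
  rw [hmap2] at hy₀'
  have hy₀'' : PM y₀' (A.label e₂₃) := pm_trans hy₀' (A.label_bar e₂₃)
  have hx'a := pm_pm hx' ha
  obtain ⟨y', hy'PM, d', hy'rel⟩ : ∃ y', PM y' (A.label e₂₃) ∧
      ∃ d' : ℤ, y' = a + d' • A.label e₁₃ := by
    rcases hx'a with h | h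
    · exact ⟨y₀', hy₀'', d, by rw [hd, h]⟩
    · refine ⟨-y₀', pm_neg_left hy₀'', -d, ?_⟩
      rw [hd, h]
      funext i
      simp only [Pi.add_apply, Pi.neg_apply, Pi.smul_apply, smul_eq_mul]
      ring
  obtain ⟨t, hy'⟩ : ∃ t : ℤ, y' = a + t • b := by
    rcases hb with h | h
    · exact ⟨d', by rw [hy'rel, ← h]⟩
    · refine ⟨-d', ?_⟩
      rw [hy'rel]
      have hlab : A.label e₁₃ = -b := by rw [h, neg_neg]
      rw [hlab]
      funext i
      simp only [Pi.add_apply, Pi.neg_apply, Pi.smul_apply, smul_eq_mul]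
      ring
  have hy'bar : PM y' (A.label (G.bar e₂₃)) := pm_trans hy'PM (pm_symm (A.label_bar e₂₃))
  have hQC3 := hmore' e₁₂ hsrc12 a (by
      rw [hs₂]
      exact hQCp₁ [(e₁₃, b), (e₁₂, a)] (by
        intro p hp
        simp only [List.mem_cons, List.mem_singleton, List.not_mem_nil, or_false] at hp
        rcases hp with rfl | rfl
        · exact hL13
        · exact hL12))
    y' (by rw [hmap2]; exact hy'bar) ⟨d', hy'rel⟩
  rw [hmap2] at hQC3
  obtain ⟨L₃, ⟨hlam3, hfam3⟩, hpin3⟩ := hQC3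
  have hpb : L₃ (G.bar e₁₃) = -b := hpin3 (G.bar e₁₃, -b) (by simp)
  have hpy' : L₃ (G.bar e₂₃) = y' := hpin3 (G.bar e₂₃, y') (by simp)
  have hsum3 := (hfam3 (G.bar e₁₃) rfl).2
  rw [hqb13, hpb, hpy'] at hsum3
  have hlamp3 : PM lw' (Q.lam p₃) := by rw [← ht₂]; exact hlam3
  -- linear independence
  have hLI := A.indep₂ e₁₂ e₁₃ hsrc13 hne1213
  have indab := indep_pm hLI ha hb
  -- uniqueness of the case
  have huniq : ¬ ((PM (A.label e₂₃) (a + b) ∧ PM (Q.lam p₂) b ∧ PM (Q.lam p₃) a) ∧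
       (PM (A.label e₂₃) (b - a) ∧ PM (Q.lam p₂) (b - (2 : ℤ) • a) ∧
        PM (Q.lam p₃) ((2 : ℤ) • b - a))) := by
    rintro ⟨⟨hA, -, -⟩, ⟨hB, -, -⟩⟩
    rcases pm_pm (pm_symm hA) (pm_symm hB) with h | h
    · have key : (2 : ℤ) • a + (0 : ℤ) • b = 0 := by
        funext i
        have := congrFun h i
        simp only [Pi.add_apply, Pi.sub_apply, Pi.smul_apply, smul_eq_mul,
          Pi.zero_apply] at this ⊢
        linarith
      have := (indab 2 0 key).1
      norm_num at this
    · have key : (0 : ℤ) • a + (2 : ℤ) • b = 0 := by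
        funext i
        have := congrFun h i
        simp only [Pi.add_apply, Pi.sub_apply, Pi.neg_apply, Pi.smul_apply, smul_eq_mul,
          Pi.zero_apply] at this ⊢
        linarith
      have := (indab 0 2 key).2
      norm_num at this
  refine ⟨?_, huniq⟩
  -- the dichotomy
  rcases pm_pm hyPM hy'PM with hyy | hyy
  · -- noncomplex case
    have heq : b + s • a = a + t • b := by rw [← hy, hyy, hy']
    have key : (s - 1) • a + (1 - t) • b = 0 := by
      funext i
      have := congrFun heq i
      simp only [Pi.add_apply, Pi.sub_apply, Pi.smul_apply, smul_eq_mul,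
        Pi.zero_apply] at this ⊢
      linarith [this]
    obtain ⟨hs0, ht0⟩ := indab _ _ key
    have hs1 : s = 1 := by omega
    have hyab : y = a + b := by rw [hy, hs1, one_smul, add_comm]
    have hy'ab : y' = a + b := by rw [← hyy]; exact hyab
    left
    refine ⟨?_, ?_, ?_⟩
    · rw [hyab] at hyPM; exact pm_symm hyPM
    · have hlwb : lw = b := by rw [← hsum2, hyab]; abel
      rw [hlwb] at hlamp2; exact pm_symm hlamp2
    · have hlwa : lw' = a := by rw [← hsum3, hy'ab]; abel
      rw [hlwa] at hlamp3; exact pm_symm hlamp3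
  · -- complex case
    have heq : b + s • a = -(a + t • b) := by rw [← hy, hyy, hy']
    have key : (s + 1) • a + (t + 1) • b = 0 := by
      funext i
      have := congrFun heq i
      simp only [Pi.add_apply, Pi.neg_apply, Pi.smul_apply, smul_eq_mul,
        Pi.zero_apply] at this ⊢
      linarith [this]
    obtain ⟨hs0, ht0⟩ := indab _ _ key
    have hs1 : s = -1 := by omega
    have ht1 : t = -1 := by omega
    have hyab : y = b - a := by
      rw [hy, hs1]
      funext i
      simp only [Pi.add_apply, Pi.sub_apply, Pi.smul_apply, smul_eq_mul]
      ring
    have hy'ab : y' = -(b - a) := by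
      rw [hy', ht1]
      funext i
      simp only [Pi.add_apply, Pi.neg_apply, Pi.sub_apply, Pi.smul_apply, smul_eq_mul]
      ring
    right
    refine ⟨?_, ?_, ?_⟩
    · rw [hyab] at hyPM; exact pm_symm hyPM
    · have hlwb : lw = b - (2 : ℤ) • a := by
        rw [← hsum2, hyab]
        funext i
        simp only [Pi.add_apply, Pi.neg_apply, Pi.sub_apply, Pi.smul_apply, smul_eq_mul]
        ring
      rw [hlwb] at hlamp2; exact pm_symm hlamp2
    · have hlwa : lw' = -((2 : ℤ) • b - a) := by
        rw [← hsum3, hy'ab]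
        funext i
        simp only [Pi.add_apply, Pi.neg_apply, Pi.sub_apply, Pi.smul_apply, smul_eq_mul]
        ring
      rw [hlwa] at hlamp3
      exact pm_unneg (pm_symm hlamp3)

end GKMQ
end

section
/- Let (Γ, α) be an abstract GKM₃ graph with a quaternionic structure. Then every complex 2-face of Γ admits a compatible signed structure: if g₁, …, g_N are the edges of the complex 2-face (indices modulo N, with t(g_k) = i(g_{k+1})), then there exist lifts γ_k ∈ ℤ^m of α(g_k) such that for every k one has γ_{k+1} + γ_{k−1} ∈ ℤ·γ_k, and the lifts −γ_k and γ_{k+1} of the labels of the two face edges based at the vertex t(g_k) are quaternionically compatible at t(g_k). -/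
namespace GKMQ

section Helpers

variable {m : ℕ}

lemma PM.refl (x : Fin m → ℤ) : PM x x := Or.inl rfl

lemma PM.neg {x y : Fin m → ℤ} (h : PM x y) : PM (-x) y := by
  rcases h with rfl | rfl
  · exact Or.inr rfl
  · exact Or.inl (neg_neg y)

lemma PM.symm {x y : Fin m → ℤ} (h : PM x y) : PM y x := by
  rcases h with rfl | rfl
  · exact Or.inl rfl
  · exact Or.inr (neg_neg y).symm

lemma PM.trans' {x y z : Fin m → ℤ} (h1 : PM x z) (h2 : PM y z) : PM x y := by
  unfold PM at *
  rcases h1 with h1 | h1 <;> rcases h2 with h2 | h2 <;> simp [h1, h2]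

lemma PM.exists_sign {x y : Fin m → ℤ} (h : PM x y) :
    ∃ s : ℤ, (s = 1 ∨ s = -1) ∧ x = s • y := by
  rcases h with rfl | rfl
  · exact ⟨1, Or.inl rfl, by simp⟩
  · exact ⟨-1, Or.inr rfl, by simp⟩

lemma PM.smul_sign {s : ℤ} (hs : s = 1 ∨ s = -1) {x y : Fin m → ℤ} (h : PM x y) :
    PM (s • x) y := by
  rcases hs with rfl | rfl
  · simpa using h
  · simpa using h.neg

lemma indep_int {x y : Fin m → ℤ}
    (h : LinearIndependent ℚ ![ratQ x, ratQ y]) :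
    ∀ s t : ℤ, s • x + t • y = 0 → s = 0 ∧ t = 0 := by
  intro s t hst
  rw [Fintype.linearIndependent_iff] at h
  have hsum : ∑ i, (![(s:ℚ), (t:ℚ)]) i • (![ratQ x, ratQ y]) i = 0 := by
    rw [Fin.sum_univ_two]
    simp only [Matrix.cons_val_zero, Matrix.cons_val_one, Matrix.head_cons]
    funext i
    have hce := congrFun hst i
    simp only [Pi.add_apply, Pi.smul_apply, smul_eq_mul, Pi.zero_apply, ratQ] at hce ⊢
    exact_mod_cast hce
  have h0 := h ![(s:ℚ), (t:ℚ)] hsum 0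
  have h1 := h ![(s:ℚ), (t:ℚ)] hsum 1
  simp only [Matrix.cons_val_zero, Matrix.cons_val_one, Matrix.head_cons] at h0 h1
  exact ⟨by exact_mod_cast h0, by exact_mod_cast h1⟩

lemma indep2_pm {x y x' y' : Fin m → ℤ}
    (h : ∀ s t : ℤ, s • x + t • y = 0 → s = 0 ∧ t = 0)
    (hx : PM x' x) (hy : PM y' y) :
    ∀ s t : ℤ, s • x' + t • y' = 0 → s = 0 ∧ t = 0 := by
  obtain ⟨sx, hsx, hex⟩ := hx.exists_sign
  obtain ⟨sy, hsy, hey⟩ := hy.exists_sign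
  intro s t hst
  rw [hex, hey, smul_smul, smul_smul] at hst
  obtain ⟨h1, h2⟩ := h _ _ hst
  constructor
  · rcases hsx with rfl | rfl <;> omega
  · rcases hsy with rfl | rfl <;> omega

lemma indep3_pm {x y z x' y' z' : Fin m → ℤ}
    (h : ∀ c1 c2 c3 : ℤ, c1 • x + c2 • y + c3 • z = 0 → c1 = 0 ∧ c2 = 0 ∧ c3 = 0)
    (hx : PM x' x) (hy : PM y' y) (hz : PM z' z) :
    ∀ c1 c2 c3 : ℤ, c1 • x' + c2 • y' + c3 • z' = 0 → c1 = 0 ∧ c2 = 0 ∧ c3 = 0 := by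
  obtain ⟨sx, hsx, hex⟩ := hx.exists_sign
  obtain ⟨sy, hsy, hey⟩ := hy.exists_sign
  obtain ⟨sz, hsz, hez⟩ := hz.exists_sign
  intro c1 c2 c3 hc
  rw [hex, hey, hez, smul_smul, smul_smul, smul_smul] at hc
  obtain ⟨h1, h2, h3⟩ := h _ _ _ hc
  refine ⟨?_, ?_, ?_⟩
  · rcases hsx with rfl | rfl <;> omega
  · rcases hsy with rfl | rfl <;> omega
  · rcases hsz with rfl | rfl <;> omega

lemma lift_unique {a b y y' w : Fin m → ℤ}
    (hind : ∀ s t : ℤ, s • a + t • b = 0 → s = 0 ∧ t = 0)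
    (hy : PM y a) (hy' : PM y' a)
    (hc : ∃ c : ℤ, y + w = c • b) (hc' : ∃ c : ℤ, y' + w = c • b) : y = y' := by
  obtain ⟨c, hcy⟩ := hc
  obtain ⟨c', hcy'⟩ := hc'
  rcases PM.trans' hy hy' with h | h
  · exact h
  · exfalso
    obtain ⟨s, hs, hya⟩ := hy'.exists_sign
    have hkey : (2*s) • a + (c - c') • b = 0 := by
      funext i
      have e1 := congrFun hcy i
      have e2 := congrFun hcy' i
      have e3 := congrFun h i
      have e4 := congrFun hya i
      simp only [Pi.add_apply, Pi.smul_apply, smul_eq_mul, Pi.zero_apply,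
        Pi.neg_apply] at e1 e2 e3 e4 ⊢
      linear_combination -2*e4 + e3 - e1 + e2
    obtain ⟨h1, _⟩ := hind _ _ hkey
    rcases hs with rfl | rfl <;> omega

lemma gkm3_int (G : Graph) (A : Axial G m) (h₃ : A.IsGKM 3)
    {v : G.V} {e1 e2 e3 : G.E}
    (h1 : G.src e1 = v) (h2 : G.src e2 = v) (h3 : G.src e3 = v)
    (h12 : e1 ≠ e2) (h13 : e1 ≠ e3) (h23 : e2 ≠ e3)
    (c1 c2 c3 : ℤ)
    (hc : c1 • A.label e1 + c2 • A.label e2 + c3 • A.label e3 = 0) :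
    c1 = 0 ∧ c2 = 0 ∧ c3 = 0 := by
  classical
  have hmem : ∀ x ∈ ({e1, e2, e3} : Finset G.E), G.src x = v := by
    intro x hx
    simp only [Finset.mem_insert, Finset.mem_singleton] at hx
    rcases hx with rfl | rfl | rfl <;> assumption
  have hcard : ({e1, e2, e3} : Finset G.E).card = 3 := by
    rw [Finset.card_insert_of_notMem (by simp [h12, h13]),
        Finset.card_insert_of_notMem (by simp [h23]), Finset.card_singleton]
  have hli := h₃ v {e1, e2, e3} hmem hcard
  rw [Fintype.linearIndependent_iff] at hli
  have hsum : ∑ i : {x // x ∈ ({e1, e2, e3} : Finset G.E)},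
      (if i.1 = e1 then (c1:ℚ) else if i.1 = e2 then (c2:ℚ) else (c3:ℚ))
        • ratQ (A.label i.1) = 0 := by
    rw [Finset.sum_coe_sort ({e1, e2, e3} : Finset G.E)
      (fun x => (if x = e1 then (c1:ℚ) else if x = e2 then (c2:ℚ) else (c3:ℚ))
        • ratQ (A.label x))]
    rw [Finset.sum_insert (by simp [h12, h13]), Finset.sum_insert (by simp [h23]),
        Finset.sum_singleton]
    rw [if_pos rfl, if_neg (fun hh => h12 hh.symm), if_pos rfl,
        if_neg (fun hh => h13 hh.symm), if_neg (fun hh => h23 hh.symm)]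
    funext i
    have hce := congrFun hc i
    simp only [Pi.add_apply, Pi.smul_apply, smul_eq_mul, Pi.zero_apply, ratQ] at hce ⊢
    rw [← add_assoc]
    exact_mod_cast hce
  have hall := hli (fun i => if i.1 = e1 then (c1:ℚ) else if i.1 = e2 then (c2:ℚ)
    else (c3:ℚ)) hsum
  refine ⟨?_, ?_, ?_⟩
  · have hh : (c1:ℚ) = 0 := by simpa using hall ⟨e1, by simp⟩
    exact_mod_cast hh
  · have hh : (c2:ℚ) = 0 := by simpa [Ne.symm h12] using hall ⟨e2, by simp⟩
    exact_mod_cast hh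
  · have hh : (c3:ℚ) = 0 := by simpa [Ne.symm h13, Ne.symm h23] using hall ⟨e3, by simp⟩
    exact_mod_cast hh

lemma QCompat.mono {G : Graph} {label : G.E → (Fin m → ℤ)} {lam : G.V → (Fin m → ℤ)}
    {qpair : G.E → G.E} {v : G.V} {s s' : List (G.E × (Fin m → ℤ))} {ℓ : Fin m → ℤ}
    (h : QCompat G label lam qpair v s ℓ) (hs : ∀ p ∈ s', p ∈ s) :
    QCompat G label lam qpair v s' ℓ := by
  obtain ⟨L, hL, hmem⟩ := h
  exact ⟨L, hL, fun p hp => hmem p (hs p hp)⟩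

lemma QCompat.neg₂ {G : Graph} {label : G.E → (Fin m → ℤ)} {lam : G.V → (Fin m → ℤ)}
    {qpair : G.E → G.E} {v : G.V} {a b : G.E} {x y ℓ : Fin m → ℤ}
    (h : QCompat G label lam qpair v [(a, x), (b, y)] ℓ) :
    QCompat G label lam qpair v [(a, -x), (b, -y)] (-ℓ) := by
  obtain ⟨L, ⟨hℓ, hfam⟩, hmem⟩ := h
  refine ⟨fun e => -(L e), ⟨hℓ.neg, fun e he => ?_⟩, ?_⟩
  · obtain ⟨hp1, hp2⟩ := hfam e he
    exact ⟨hp1.neg, by rw [← neg_add, hp2]⟩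
  · intro p hp
    have ha : L a = x := hmem (a, x) (by simp)
    have hb : L b = y := hmem (b, y) (by simp)
    simp only [List.mem_cons, List.mem_singleton, List.not_mem_nil, or_false] at hp
    rcases hp with rfl | rfl
    · show -(L a) = -x
      rw [ha]
    · show -(L b) = -y
      rw [hb]

lemma ell_unique (G : Graph) (A : Axial G m) (Q : QuatStructure G A)
    {v : G.V} {a : G.E} {x ℓ ℓ' : Fin m → ℤ} (ha : G.src a = v)
    (h : QCompat G A.label Q.lam Q.qpair v [(a, x)] ℓ)
    (h' : QCompat G A.label Q.lam Q.qpair v [(a, x)] ℓ') : ℓ = ℓ' := by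
  obtain ⟨L, ⟨hℓ, hfam⟩, hmem⟩ := h
  obtain ⟨L', ⟨hℓ', hfam'⟩, hmem'⟩ := h'
  have hLa : L a = x := hmem (a, x) (by simp)
  have hLa' : L' a = x := hmem' (a, x) (by simp)
  have hp1 := hfam a ha
  have hp1' := hfam' a ha
  have hqa : G.src (Q.qpair a) = v := by rw [Q.qpair_src]; exact ha
  have hp2 := hfam (Q.qpair a) hqa
  have hp2' := hfam' (Q.qpair a) hqa
  have e1 : x + L (Q.qpair a) = ℓ := by rw [← hLa]; exact hp1.2
  have e2 : x + L' (Q.qpair a) = ℓ' := by rw [← hLa']; exact hp1'.2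
  rcases PM.trans' hℓ hℓ' with h | h
  · exact h
  · rcases PM.trans' hp2.1 hp2'.1 with hw | hw
    · rw [← e1, ← e2, hw]
    · have hx0 : x = 0 := by
        funext i
        have i1 := congrFun e1 i
        have i2 := congrFun e2 i
        have i3 := congrFun h i
        have i4 := congrFun hw i
        simp only [Pi.add_apply, Pi.neg_apply, Pi.zero_apply] at i1 i2 i3 i4 ⊢
        omega
      have hla0 : A.label a = 0 := by
        have hh := hp1.1
        rw [hLa, hx0] at hh
        rcases hh with h0 | h0
        · exact h0.symm
        · exact neg_eq_zero.mp h0.symm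
      have hcon := indep_int (A.indep₂ a (Q.qpair a) (Q.qpair_src a)
        (Ne.symm (Q.qpair_ne a))) 1 0 (by rw [hla0]; simp)
      exact absurd hcon.1 one_ne_zero

lemma exists_qfam (G : Graph) (A : Axial G m) (Q : QuatStructure G A)
    (e0 : G.E) (x : Fin m → ℤ) (hx : PM x (A.label e0)) :
    ∃ ℓ L, QFam G A.label Q.lam Q.qpair (G.src e0) L ℓ ∧ L e0 = x := by
  classical
  have hind : ∀ e : G.E, ∀ s t : ℤ,
      s • A.label e + t • A.label (Q.qpair e) = 0 → s = 0 ∧ t = 0 :=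
    fun e => indep_int (A.indep₂ e (Q.qpair e) (Q.qpair_src e) (Ne.symm (Q.qpair_ne e)))
  obtain ⟨x0, y0, hx0, hy0, hsum⟩ := Q.pair_sum e0
  obtain ⟨s, hs, hxs⟩ := (PM.trans' hx hx0).exists_sign
  set ℓ : Fin m → ℤ := s • (x0 + y0) with hℓdef
  have hℓpm : PM ℓ (Q.lam (G.src e0)) := PM.smul_sign hs hsum
  have huniq : ∀ e2 : G.E, ∀ u u' : Fin m → ℤ,
      (PM u (A.label e2) ∧ PM (ℓ - u) (A.label (Q.qpair e2))) →
      (PM u' (A.label e2) ∧ PM (ℓ - u') (A.label (Q.qpair e2))) → u = u' := by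
    rintro e2 u u' ⟨hu1, hu2⟩ ⟨hu1', hu2'⟩
    rcases PM.trans' hu1 hu1' with h | h
    · exact h
    · have hu'e : u' = -u := by rw [h]; simp
      rw [hu'e, sub_neg_eq_add] at hu2'
      rcases PM.trans' hu2 hu2' with h2 | h2
      · exfalso
        have hu0 : u = 0 := by
          funext i
          have hh := congrFun h2 i
          simp only [Pi.sub_apply, Pi.add_apply, Pi.zero_apply] at hh ⊢
          omega
        have hl0 : A.label e2 = 0 := by
          rw [hu0] at hu1
          rcases hu1 with h0 | h0
          · exact h0.symm
          · exact neg_eq_zero.mp h0.symm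
        have hcon := hind e2 1 0 (by rw [hl0]; simp)
        exact absurd hcon.1 one_ne_zero
      · exfalso
        have hl0 : ℓ = 0 := by
          funext i
          have hh := congrFun h2 i
          simp only [Pi.sub_apply, Pi.add_apply, Pi.neg_apply, Pi.zero_apply] at hh ⊢
          omega
        obtain ⟨s1, hs1, he1⟩ := hu1.exists_sign
        have hu2z : PM (-u) (A.label (Q.qpair e2)) := by
          rw [hl0] at hu2
          simpa [zero_sub] using hu2
        obtain ⟨s2, hs2, he2⟩ := hu2z.exists_sign
        have hzero : s1 • A.label e2 + s2 • A.label (Q.qpair e2) = 0 := by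
          rw [← he1, ← he2]
          simp
        obtain ⟨hz1, _⟩ := hind e2 _ _ hzero
        rcases hs1 with rfl | rfl <;> omega
  have hex : ∀ e2 : G.E, G.src e2 = G.src e0 →
      ∃ u, PM u (A.label e2) ∧ PM (ℓ - u) (A.label (Q.qpair e2)) := by
    intro e2 he2
    obtain ⟨xe, ye, hxe, hye, hse⟩ := Q.pair_sum e2
    rw [he2] at hse
    rcases PM.trans' hℓpm hse with h | h
    · refine ⟨xe, hxe, ?_⟩
      have hss : ℓ - xe = ye := by rw [h]; abel
      rw [hss]; exact hye
    · refine ⟨-xe, hxe.neg, ?_⟩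
      have hss : ℓ - -xe = -ye := by rw [h]; abel
      rw [hss]; exact hye.neg
  set L : G.E → (Fin m → ℤ) := fun e2 =>
    if h : ∃ u, PM u (A.label e2) ∧ PM (ℓ - u) (A.label (Q.qpair e2)) then h.choose
    else A.label e2 with hLdef
  have hLspec : ∀ e2 : G.E, G.src e2 = G.src e0 →
      PM (L e2) (A.label e2) ∧ PM (ℓ - L e2) (A.label (Q.qpair e2)) := by
    intro e2 he2
    have h := hex e2 he2
    simp only [hLdef, dif_pos h]
    exact h.choose_spec
  refine ⟨ℓ, L, ⟨hℓpm, ?_⟩, ?_⟩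
  · intro e2 he2
    refine ⟨(hLspec e2 he2).1, ?_⟩
    have hq2 : G.src (Q.qpair e2) = G.src e0 := by rw [Q.qpair_src]; exact he2
    have h1 := hLspec e2 he2
    have h2 := hLspec (Q.qpair e2) hq2
    have h4 : PM (ℓ - (ℓ - L e2)) (A.label (Q.qpair (Q.qpair e2))) := by
      rw [Q.qpair_invol]
      have hss : ℓ - (ℓ - L e2) = L e2 := by abel
      rw [hss]; exact h1.1
    have heq := huniq (Q.qpair e2) (L (Q.qpair e2)) (ℓ - L e2) h2 ⟨h1.2, h4⟩
    rw [heq]; abel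
  · have hP : PM x (A.label e0) ∧ PM (ℓ - x) (A.label (Q.qpair e0)) := by
      refine ⟨hx, ?_⟩
      have hss : ℓ - x = s • y0 := by rw [hℓdef, hxs, smul_add]; abel
      rw [hss]; exact PM.smul_sign hs hy0
    exact huniq e0 (L e0) x (hLspec e0 rfl) hP

end Helpers

section Paths

variable {m : ℕ}

lemma conn_map_inj (G : Graph) (C : Connection G) {e f f' : G.E}
    (hf : G.src f = G.src e) (hf' : G.src f' = G.src e)
    (h : C.map e f = C.map e f') : f = f' := by
  have h1 := C.map_bar e f hf
  have h2 := C.map_bar e f' hf'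
  rw [h] at h1
  exact h1.symm.trans h2

lemma conn_unique (G : Graph) (A : Axial G m) (h₃ : A.IsGKM 3)
    {C₁ C₂ : Connection G} (hc1 : CompatibleConn G A.label C₁)
    (hc2 : CompatibleConn G A.label C₂) (e f : G.E) (hf : G.src f = G.src e) :
    C₁.map e f = C₂.map e f := by
  classical
  by_cases hef : f = e
  · subst hef
    rw [C₁.map_self, C₂.map_self]
  by_contra hne
  obtain ⟨x1, y1, hx1, hy1, c1, hcy1⟩ := hc1 e f hf
  obtain ⟨x2, y2, hx2, hy2, c2, hcy2⟩ := hc2 e f hf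
  obtain ⟨s1, hs1, hxe1⟩ := hx1.exists_sign
  obtain ⟨s2, hs2, hxe2⟩ := hx2.exists_sign
  obtain ⟨t1, ht1, hye1⟩ := hy1.exists_sign
  obtain ⟨t2, ht2, hye2⟩ := hy2.exists_sign
  obtain ⟨sb, hsb, hbe⟩ := (A.label_bar e).symm.exists_sign
  -- hbe : A.label e = sb • A.label (G.bar e)
  obtain ⟨sb', hsb', hbe'⟩ := (A.label_bar e).exists_sign
  -- hbe' : A.label (G.bar e) = sb' • A.label e
  have hpair := indep_int (A.indep₂ e f hf (Ne.symm hef))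
  have hg1 : C₁.map e f ≠ G.bar e := by
    intro hgb
    rw [hgb] at hye1
    have hkey : (c1 - t1*sb') • A.label e + s1 • A.label f = 0 := by
      funext i
      have e1 := congrFun hcy1 i
      have e2 := congrFun hxe1 i
      have e3 := congrFun hye1 i
      have e4 := congrFun hbe' i
      simp only [Pi.add_apply, Pi.smul_apply, smul_eq_mul, Pi.zero_apply] at e1 e2 e3 e4 ⊢
      linear_combination -e1 - e2 + e3 + t1*e4
    obtain ⟨hA, hB⟩ := hpair _ _ hkey
    rcases hs1 with rfl | rfl <;> omega
  have hg2 : C₂.map e f ≠ G.bar e := by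
    intro hgb
    rw [hgb] at hye2
    have hkey : (c2 - t2*sb') • A.label e + s2 • A.label f = 0 := by
      funext i
      have e1 := congrFun hcy2 i
      have e2 := congrFun hxe2 i
      have e3 := congrFun hye2 i
      have e4 := congrFun hbe' i
      simp only [Pi.add_apply, Pi.smul_apply, smul_eq_mul, Pi.zero_apply] at e1 e2 e3 e4 ⊢
      linear_combination -e1 - e2 + e3 + t2*e4
    obtain ⟨hA, hB⟩ := hpair _ _ hkey
    rcases hs2 with rfl | rfl <;> omega
  have hsrc1 : G.src (C₁.map e f) = G.tgt e := C₁.map_src e f hf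
  have hsrc2 : G.src (C₂.map e f) = G.tgt e := C₂.map_src e f hf
  have key : (s2*t1) • A.label (C₁.map e f) + (-(s1*t2)) • A.label (C₂.map e f)
      + (-((s2*c1 - s1*c2)*sb)) • A.label (G.bar e) = 0 := by
    funext i
    have e1 := congrFun hcy1 i
    have e2 := congrFun hxe1 i
    have e3 := congrFun hye1 i
    have e4 := congrFun hcy2 i
    have e5 := congrFun hxe2 i
    have e6 := congrFun hye2 i
    have e7 := congrFun hbe i
    simp only [Pi.add_apply, Pi.smul_apply, Pi.neg_apply, smul_eq_mul,
      Pi.zero_apply] at e1 e2 e3 e4 e5 e6 e7 ⊢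
    linear_combination s2*e1 + s2*e2 - s2*e3 - s1*e4 - s1*e5 + s1*e6 + (s2*c1 - s1*c2)*e7
  have h3 := gkm3_int G A h₃ hsrc1 hsrc2 rfl hne hg1 hg2 _ _ _ key
  obtain ⟨hz, -, -⟩ := h3
  rcases hs2 with rfl | rfl <;> rcases ht1 with rfl | rfl <;> omega

lemma connPath_zero (G : Graph) (C : Connection G) (e f : G.E) :
    connPath G C e f 0 = e := rfl

lemma connPath_one (G : Graph) (C : Connection G) (e f : G.E) :
    connPath G C e f 1 = C.map e f := rfl

lemma connPath_step (G : Graph) (C : Connection G) (e f : G.E) (k : ℕ) :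
    connPath G C e f (k+2) = C.map (connPath G C e f (k+1)) (G.bar (connPath G C e f k)) :=
  rfl

lemma connPath_src (G : Graph) (C : Connection G) {e f : G.E} (hf : G.src f = G.src e) :
    ∀ k, G.src (connPath G C e f (k+1)) = G.tgt (connPath G C e f k) := by
  intro k
  induction k with
  | zero => exact C.map_src e f hf
  | succ n ih =>
      rw [connPath_step]
      exact C.map_src _ _ ih.symm

lemma connPath_ne_bar (G : Graph) (C : Connection G) {e f : G.E}
    (hf : G.src f = G.src e) (hef : f ≠ e) :
    ∀ k, connPath G C e f (k+1) ≠ G.bar (connPath G C e f k) := by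
  intro k
  induction k with
  | zero =>
      intro h
      rw [connPath_one, connPath_zero, ← C.map_self] at h
      exact hef (conn_map_inj G C hf rfl h)
  | succ n ih =>
      intro h
      rw [connPath_step] at h
      have h2 : C.map (connPath G C e f (n+1)) (G.bar (connPath G C e f n)) =
          C.map (connPath G C e f (n+1)) (connPath G C e f (n+1)) := by
        rw [C.map_self]
        exact h
      have hs : G.src (G.bar (connPath G C e f n)) = G.src (connPath G C e f (n+1)) :=
        (connPath_src G C hf n).symm
      have := conn_map_inj G C hs rfl h2
      exact ih this.symm

lemma connPath_congr (G : Graph) (A : Axial G m) (h₃ : A.IsGKM 3)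
    {C₁ C₂ : Connection G} (hc1 : CompatibleConn G A.label C₁)
    (hc2 : CompatibleConn G A.label C₂)
    {e f : G.E} (hf : G.src f = G.src e) :
    ∀ k, connPath G C₁ e f k = connPath G C₂ e f k := by
  have key : ∀ k, connPath G C₁ e f k = connPath G C₂ e f k ∧
      connPath G C₁ e f (k+1) = connPath G C₂ e f (k+1) := by
    intro k
    induction k with
    | zero =>
        refine ⟨rfl, ?_⟩
        rw [connPath_one, connPath_one]
        exact conn_unique G A h₃ hc1 hc2 e f hf
    | succ n ih =>
        refine ⟨ih.2, ?_⟩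
        rw [connPath_step, connPath_step, ih.1, ih.2]
        exact conn_unique G A h₃ hc1 hc2 _ _ (connPath_src G C₂ hf n).symm
  exact fun k => (key k).1

lemma quat_prop (G : Graph) (A : Axial G m) (Q : QuatStructure G A)
    {C : Connection G}
    (hqc : ∀ e f, G.src f = G.src e → C.map e (Q.qpair f) = Q.qpair (C.map e f))
    {e f : G.E} (hf : G.src f = G.src e) (k : ℕ)
    (h : Q.qpair (connPath G C e f (k+1)) = G.bar (connPath G C e f k)) :
    Q.qpair (connPath G C e f (k+2)) = G.bar (connPath G C e f (k+1)) := by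
  have h' : Q.qpair (G.bar (connPath G C e f k)) = connPath G C e f (k+1) := by
    rw [← h, Q.qpair_invol]
  rw [connPath_step,
    ← hqc (connPath G C e f (k+1)) (G.bar (connPath G C e f k)) (connPath_src G C hf k).symm,
    h', C.map_self]

end Paths

section Main

variable {m : ℕ}

lemma signed_aux (G : Graph) (A : Axial G m) (h₃ : A.IsGKM 3) (Q : QuatStructure G A)
    (C' : Connection G) (hC' : CompatibleConn G A.label C')
    (hcond : ∀ e xe lv, QCompat G A.label Q.lam Q.qpair (G.src e) [(e, xe)] lv →
      ∃ lw, (∃ c : ℤ, lw = lv + c • A.label e) ∧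
        QCompat G A.label Q.lam Q.qpair (G.tgt e) [(G.bar e, -xe)] lw ∧
        ∀ f, G.src f = G.src e → ∀ xf,
          QCompat G A.label Q.lam Q.qpair (G.src e) [(e, xe), (f, xf)] lv →
          ∀ y, PM y (A.label (C'.map e f)) → (∃ c : ℤ, y = xf + c • A.label e) →
            QCompat G A.label Q.lam Q.qpair (G.tgt e) [(G.bar e, -xe), (C'.map e f, y)] lw)
    (g : ℕ → G.E) (N : ℕ)
    (hgper : ∀ k, g (k + N) = g k)
    (hsrc : ∀ k, G.src (g (k+1)) = G.tgt (g k))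
    (hnb : ∀ k, g (k+1) ≠ G.bar (g k))
    (hstep : ∀ k, g (k+2) = C'.map (g (k+1)) (G.bar (g k)))
    (hg1 : ∃ f0, G.src f0 = G.src (g 0) ∧ g 1 = C'.map (g 0) f0)
    (hcx0 : Q.qpair (g 1) ≠ G.bar (g 0)) :
    ∃ γ : ℕ → (Fin m → ℤ), SignedStructureOn G A Q g N γ := by
  classical
  obtain ⟨f0, hf0src, hg1f⟩ := hg1
  -- base family at the source of g 0
  obtain ⟨ℓv, L, hfam, hLg0⟩ := exists_qfam G A Q (g 0) (A.label (g 0)) (PM.refl _)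
  have hQs : QCompat G A.label Q.lam Q.qpair (G.src (g 0)) [(g 0, A.label (g 0))] ℓv := by
    refine ⟨L, hfam, ?_⟩
    intro p hp
    simp only [List.mem_singleton] at hp
    rw [hp]
    exact hLg0
  obtain ⟨lw0, hlw0rel, hQbar0, hfc0⟩ := hcond (g 0) (A.label (g 0)) ℓv hQs
  have hQd : QCompat G A.label Q.lam Q.qpair (G.src (g 0))
      [(g 0, A.label (g 0)), (f0, L f0)] ℓv := by
    refine ⟨L, hfam, ?_⟩
    intro p hp
    simp only [List.mem_cons, List.mem_singleton, List.not_mem_nil, or_false] at hp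
    rcases hp with rfl | rfl
    · exact hLg0
    · rfl
  obtain ⟨x', y', hx', hy', c0, hc0⟩ := hC' (g 0) f0 hf0src
  have hLf0pm : PM (L f0) (A.label f0) := (hfam.2 f0 hf0src).1
  have hyEx0 : ∃ y, PM y (A.label (C'.map (g 0) f0)) ∧
      ∃ c : ℤ, y = L f0 + c • A.label (g 0) := by
    rcases PM.trans' hLf0pm hx' with hLx | hLx
    · exact ⟨y', hy', c0, by rw [hc0, hLx]⟩
    · refine ⟨-y', hy'.neg, -c0, ?_⟩
      rw [hc0, hLx]
      funext i
      simp only [Pi.neg_apply, Pi.add_apply, Pi.smul_apply, smul_eq_mul]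
      ring
  obtain ⟨γ1, hγ1pmx, cγ1, hγ1c⟩ := hyEx0
  have hQI0 : QCompat G A.label Q.lam Q.qpair (G.tgt (g 0))
      [(G.bar (g 0), -(A.label (g 0))), (g 1, γ1)] lw0 := by
    have hh := hfc0 f0 hf0src (L f0) hQd γ1 hγ1pmx ⟨cγ1, hγ1c⟩
    rw [← hg1f] at hh
    exact hh
  have hγ1pm : PM γ1 (A.label (g 1)) := by
    rw [hg1f]
    exact hγ1pmx
  -- the recursion step
  have hstepEx : ∀ (k : ℕ) (p : (Fin m → ℤ) × (Fin m → ℤ) × (Fin m → ℤ)),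
      ∃ q : (Fin m → ℤ) × (Fin m → ℤ) × (Fin m → ℤ),
        (PM p.1 (A.label (g k)) ∧ PM p.2.1 (A.label (g (k+1))) ∧
          QCompat G A.label Q.lam Q.qpair (G.tgt (g k))
            [(G.bar (g k), -p.1), (g (k+1), p.2.1)] p.2.2) →
        (q.1 = p.2.1 ∧ PM q.1 (A.label (g (k+1))) ∧ PM q.2.1 (A.label (g (k+2))) ∧
          QCompat G A.label Q.lam Q.qpair (G.tgt (g (k+1)))
            [(G.bar (g (k+1)), -q.1), (g (k+2), q.2.1)] q.2.2 ∧
          (∃ c : ℤ, q.2.1 + p.1 = c • A.label (g (k+1))) ∧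
          (∃ c : ℤ, q.2.2 = p.2.2 + c • A.label (g (k+1)))) := by
    intro k p
    by_cases hp : PM p.1 (A.label (g k)) ∧ PM p.2.1 (A.label (g (k+1))) ∧
        QCompat G A.label Q.lam Q.qpair (G.tgt (g k))
          [(G.bar (g k), -p.1), (g (k+1), p.2.1)] p.2.2
    swap
    · exact ⟨p, fun h => absurd h hp⟩
    obtain ⟨hp1, hp2, hpQ⟩ := hp
    have hsrk : G.src (g (k+1)) = G.tgt (g k) := hsrc k
    have hQ1 : QCompat G A.label Q.lam Q.qpair (G.src (g (k+1)))
        [(g (k+1), p.2.1)] p.2.2 := by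
      rw [hsrk]
      exact hpQ.mono (by intro q hq; simp only [List.mem_singleton] at hq; simp [hq])
    obtain ⟨lw, hlwrel, hQb, hfc⟩ := hcond (g (k+1)) p.2.1 p.2.2 hQ1
    have hsb : G.src (G.bar (g k)) = G.src (g (k+1)) := hsrk.symm
    have hQ2 : QCompat G A.label Q.lam Q.qpair (G.src (g (k+1)))
        [(g (k+1), p.2.1), (G.bar (g k), -p.1)] p.2.2 := by
      rw [hsrk]
      refine hpQ.mono ?_
      intro q hq
      simp only [List.mem_cons, List.mem_singleton, List.not_mem_nil, or_false] at hq ⊢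
      tauto
    obtain ⟨x', y', hx', hy', c1, hc1⟩ := hC' (g (k+1)) (G.bar (g k)) hsb
    have hpb : PM (-p.1) (A.label (G.bar (g k))) :=
      (PM.trans' hp1 (A.label_bar (g k))).neg
    have hyEx : ∃ y, PM y (A.label (C'.map (g (k+1)) (G.bar (g k)))) ∧
        ∃ c : ℤ, y = -p.1 + c • A.label (g (k+1)) := by
      rcases PM.trans' hpb hx' with hLx | hLx
      · exact ⟨y', hy', c1, by rw [hc1, hLx]⟩
      · refine ⟨-y', hy'.neg, -c1, ?_⟩
        rw [hc1, hLx]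
        funext i
        simp only [Pi.neg_apply, Pi.add_apply, Pi.smul_apply, smul_eq_mul]
        ring
    obtain ⟨y, hypm, cy, hyc⟩ := hyEx
    have hQnext := hfc (G.bar (g k)) hsb (-p.1) hQ2 y hypm ⟨cy, hyc⟩
    rw [← hstep k] at hQnext hypm
    refine ⟨(p.2.1, y, lw), fun _ => ⟨rfl, hp2, hypm, hQnext, ⟨cy, ?_⟩, hlwrel⟩⟩
    rw [hyc]
    funext i
    simp only [Pi.add_apply, Pi.neg_apply, Pi.smul_apply, smul_eq_mul]
    ring
  choose F hF using hstepEx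
  set D : ℕ → ((Fin m → ℤ) × (Fin m → ℤ) × (Fin m → ℤ)) :=
    fun k => Nat.rec (A.label (g 0), γ1, lw0) (fun n ih => F n ih) k with hD
  have hDs : ∀ k, D (k+1) = F k (D k) := fun k => rfl
  have hInv : ∀ k, PM (D k).1 (A.label (g k)) ∧ PM (D k).2.1 (A.label (g (k+1))) ∧
      QCompat G A.label Q.lam Q.qpair (G.tgt (g k))
        [(G.bar (g k), -(D k).1), (g (k+1), (D k).2.1)] (D k).2.2 := by
    intro k
    induction k with
    | zero => exact ⟨PM.refl _, hγ1pm, hQI0⟩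
    | succ n ih =>
        have h := hF n (D n) ih
        rw [hDs n]
        exact ⟨h.2.1, h.2.2.1, h.2.2.2.1⟩
  have hlink : ∀ k, (D (k+1)).1 = (D k).2.1 := fun k => by
    rw [hDs k]; exact (hF k (D k) (hInv k)).1
  set γ : ℕ → (Fin m → ℤ) := fun k => (D k).1 with hγdef
  set ℓ : ℕ → (Fin m → ℤ) := fun k => (D k).2.2 with hℓdef
  have hγs : ∀ k, γ (k+1) = (D k).2.1 := hlink
  have hPMγ : ∀ k, PM (γ k) (A.label (g k)) := fun k => (hInv k).1
  have hγ0 : γ 0 = A.label (g 0) := rfl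
  have hγ1e : γ 1 = γ1 := hlink 0
  have hQC : ∀ k, QCompat G A.label Q.lam Q.qpair (G.tgt (g k))
      [(G.bar (g k), -(γ k)), (g (k+1), γ (k+1))] (ℓ k) := by
    intro k
    have h := (hInv k).2.2
    rw [← hγs k] at h
    exact h
  have hrecγ : ∀ k, ∃ c : ℤ, γ (k+2) + γ k = c • A.label (g (k+1)) := by
    intro k
    obtain ⟨c, hc⟩ := (hF k (D k) (hInv k)).2.2.2.2.1
    refine ⟨c, ?_⟩
    show (D (k+2)).1 + (D k).1 = c • A.label (g (k+1))
    rw [hlink (k+1), hDs k]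
    exact hc
  have hlrec : ∀ k, ∃ c : ℤ, ℓ (k+1) = ℓ k + c • A.label (g (k+1)) := by
    intro k
    obtain ⟨c, hc⟩ := (hF k (D k) (hInv k)).2.2.2.2.2
    refine ⟨c, ?_⟩
    show (D (k+1)).2.2 = (D k).2.2 + c • A.label (g (k+1))
    rw [hDs k]
    exact hc
  clear hD hDs hInv hlink hγs
  -- independence of γ 0, γ 1
  have hpmγ0b : PM (γ 0) (A.label (G.bar (g 0))) :=
    PM.trans' (hPMγ 0) (A.label_bar (g 0))
  have hind01 : ∀ s t : ℤ, s • γ 0 + t • γ 1 = 0 → s = 0 ∧ t = 0 := by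
    have hbase := indep_int (A.indep₂ (G.bar (g 0)) (g 1) (hsrc 0) (Ne.symm (hnb 0)))
    exact indep2_pm hbase hpmγ0b (hPMγ 1)
  have hindk : ∀ k, ∀ s t : ℤ,
      s • A.label (g (k+2)) + t • A.label (g (k+1)) = 0 → s = 0 ∧ t = 0 := by
    intro k
    have hbase := indep_int (A.indep₂ (g (k+2)) (G.bar (g (k+1)))
      (hsrc (k+1)).symm (hnb (k+1)))
    exact indep2_pm hbase (PM.refl _) (A.label_bar (g (k+1))).symm
  -- SL₂ bookkeeping
  have hcoef : ∀ k, ∃ a b c d : ℤ, γ k = a • γ 0 + b • γ 1 ∧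
      γ (k+1) = c • γ 0 + d • γ 1 ∧ a*d - b*c = 1 := by
    intro k
    induction k with
    | zero =>
        refine ⟨1, 0, 0, 1, by funext i; simp, by funext i; simp, by ring⟩
    | succ n ih =>
        obtain ⟨a, b, c, d, h1, h2, hdet⟩ := ih
        obtain ⟨cc, hcc⟩ := hrecγ n
        obtain ⟨s, hs, hlab⟩ := (hPMγ (n+1)).symm.exists_sign
        refine ⟨c, d, cc*s*c - a, cc*s*d - b, h2, ?_, by linear_combination hdet⟩
        funext i
        have e1 := congrFun hcc i
        have e2 := congrFun h1 i
        have e3 := congrFun h2 i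
        have e4 := congrFun hlab i
        simp only [Pi.add_apply, Pi.smul_apply, smul_eq_mul, Pi.zero_apply] at e1 e2 e3 e4 ⊢
        linear_combination e1 - e2 + cc*e4 + cc*s*e3
  -- boundary values
  have hgN0 : g N = g 0 := by
    have := hgper 0
    simpa using this
  have hgN1 : g (N+1) = g 1 := by
    have := hgper 1
    rwa [show 1 + N = N + 1 by omega] at this
  have h0or : γ N = γ 0 ∨ γ N = -γ 0 := by
    have h := hPMγ N
    rw [hgN0, ← hγ0] at h
    exact h
  have h1or : γ (N+1) = γ 1 ∨ γ (N+1) = -γ 1 := by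
    have h := hPMγ (N+1)
    rw [hgN1] at h
    exact PM.trans' h (hPMγ 1)
  -- exclude the double sign flip using the quaternionic structure
  have hneg_excl : ¬ (γ N = -γ 0 ∧ γ (N+1) = -γ 1) := by
    rintro ⟨hA, hB⟩
    have hQN := hQC N
    rw [hgN0, hgN1, hA, hB, neg_neg] at hQN
    have hQ0' := (hQC 0).neg₂
    rw [neg_neg] at hQ0'
    have hbar0 : G.src (G.bar (g 0)) = G.tgt (g 0) := rfl
    have hQ0s : QCompat G A.label Q.lam Q.qpair (G.tgt (g 0)) [(G.bar (g 0), γ 0)] (-(ℓ 0)) :=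
      hQ0'.mono (by intro p hp; simp only [List.mem_singleton] at hp; simp [hp])
    have hQNs : QCompat G A.label Q.lam Q.qpair (G.tgt (g 0)) [(G.bar (g 0), γ 0)] (ℓ N) :=
      hQN.mono (by intro p hp; simp only [List.mem_singleton] at hp; simp [hp])
    have hℓN : -(ℓ 0) = ℓ N := ell_unique G A Q hbar0 hQ0s hQNs
    -- telescoping
    have htel : ∀ k, ∃ p q : ℤ, ℓ k = ℓ 0 + p • γ 0 + q • γ 1 := by
      intro k
      induction k with
      | zero => exact ⟨0, 0, by funext i; simp⟩
      | succ n ih =>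
          obtain ⟨p, q, hpq⟩ := ih
          obtain ⟨cc, hcc⟩ := hlrec n
          obtain ⟨s, hs, hlab⟩ := (hPMγ (n+1)).symm.exists_sign
          obtain ⟨a, b, c, d, h1, h2, -⟩ := hcoef n
          refine ⟨p + cc*s*c, q + cc*s*d, ?_⟩
          funext i
          have e0 := congrFun hpq i
          have e1 := congrFun hcc i
          have e2 := congrFun hlab i
          have e3 := congrFun h2 i
          simp only [Pi.add_apply, Pi.smul_apply, smul_eq_mul] at e0 e1 e2 e3 ⊢
          linear_combination e1 + e0 + cc*e2 + cc*s*e3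
    obtain ⟨p, q, hpq⟩ := htel N
    rw [← hℓN] at hpq
    -- the third edge at the vertex tgt (g 0)
    obtain ⟨L0, ⟨hℓ0pm, hfam0⟩, hmem0⟩ := hQC 0
    have hL0a : L0 (G.bar (g 0)) = -(γ 0) := hmem0 (G.bar (g 0), -(γ 0)) List.mem_cons_self
    have hp1 := hfam0 (G.bar (g 0)) hbar0
    have hLq : L0 (Q.qpair (G.bar (g 0))) = ℓ 0 + γ 0 := by
      have hh := hp1.2
      rw [hL0a] at hh
      funext i
      have := congrFun hh i
      simp only [Pi.add_apply, Pi.neg_apply] at this ⊢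
      omega
    have hqsrc : G.src (Q.qpair (G.bar (g 0))) = G.tgt (g 0) := Q.qpair_src _
    have hp2 := (hfam0 _ hqsrc).1
    have hd12 : Q.qpair (G.bar (g 0)) ≠ G.bar (g 0) := Q.qpair_ne _
    have hd13 : Q.qpair (G.bar (g 0)) ≠ g 1 := by
      intro hh
      apply hcx0
      rw [← hh, Q.qpair_invol]
    have hd23 : G.bar (g 0) ≠ g 1 := Ne.symm (hnb 0)
    have h3base : ∀ c1 c2 c3 : ℤ, c1 • A.label (Q.qpair (G.bar (g 0))) +
        c2 • A.label (G.bar (g 0)) + c3 • A.label (g 1) = 0 →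
        c1 = 0 ∧ c2 = 0 ∧ c3 = 0 :=
      fun c1 c2 c3 hcc => gkm3_int G A h₃ hqsrc hbar0 (hsrc 0) hd12 hd13 hd23 c1 c2 c3 hcc
    have h3 := indep3_pm h3base hp2 hpmγ0b (hPMγ 1)
    have hzero : (2:ℤ) • L0 (Q.qpair (G.bar (g 0))) + (p - 2) • γ 0 + q • γ 1 = 0 := by
      funext i
      have eL := congrFun hLq i
      have epq := congrFun hpq i
      simp only [Pi.add_apply, Pi.smul_apply, smul_eq_mul, Pi.neg_apply,
        Pi.zero_apply] at eL epq ⊢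
      linear_combination 2*eL - epq
    obtain ⟨h2z, -, -⟩ := h3 _ _ _ hzero
    omega
  -- conclude that γ has no sign holonomy
  have hNid : γ N = γ 0 ∧ γ (N+1) = γ 1 := by
    obtain ⟨a, b, c, d, h1, h2, hdet⟩ := hcoef N
    rcases h0or with hA | hA <;> rcases h1or with hB | hB
    · exact ⟨hA, hB⟩
    · exfalso
      have h1' : (a - 1) • γ 0 + b • γ 1 = 0 := by
        funext i
        have e1 := congrFun h1 i
        have eA := congrFun hA i
        simp only [Pi.add_apply, Pi.smul_apply, smul_eq_mul, Pi.zero_apply] at e1 eA ⊢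
        linear_combination eA - e1
      have h2' : c • γ 0 + (d + 1) • γ 1 = 0 := by
        funext i
        have e2 := congrFun h2 i
        have eB := congrFun hB i
        simp only [Pi.add_apply, Pi.smul_apply, smul_eq_mul, Pi.zero_apply,
          Pi.neg_apply] at e2 eB ⊢
        linear_combination eB - e2
      obtain ⟨ha1, hb0⟩ := hind01 _ _ h1'
      obtain ⟨hc0, hd1⟩ := hind01 _ _ h2'
      have haa : a = 1 := by omega
      have hdd : d = -1 := by omega
      have hbb : b = 0 := hb0
      rw [haa, hdd, hbb, hc0] at hdet
      norm_num at hdet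
    · exfalso
      have h1' : (a + 1) • γ 0 + b • γ 1 = 0 := by
        funext i
        have e1 := congrFun h1 i
        have eA := congrFun hA i
        simp only [Pi.add_apply, Pi.smul_apply, smul_eq_mul, Pi.zero_apply,
          Pi.neg_apply] at e1 eA ⊢
        linear_combination eA - e1
      have h2' : c • γ 0 + (d - 1) • γ 1 = 0 := by
        funext i
        have e2 := congrFun h2 i
        have eB := congrFun hB i
        simp only [Pi.add_apply, Pi.smul_apply, smul_eq_mul, Pi.zero_apply] at e2 eB ⊢
        linear_combination eB - e2
      obtain ⟨ha1, hb0⟩ := hind01 _ _ h1'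
      obtain ⟨hc0, hd1⟩ := hind01 _ _ h2'
      have haa : a = -1 := by omega
      have hdd : d = 1 := by omega
      rw [haa, hdd, hb0, hc0] at hdet
      norm_num at hdet
    · exact absurd ⟨hA, hB⟩ hneg_excl
  -- full periodicity
  have hper2 : ∀ k, γ (k + N) = γ k ∧ γ (k + N + 1) = γ (k + 1) := by
    intro k
    induction k with
    | zero =>
        constructor
        · simpa using hNid.1
        · simpa using hNid.2
    | succ n ih =>
        obtain ⟨ihA, ihB⟩ := ih
        have hfst : γ (n + 1 + N) = γ (n + 1) := by
          rw [show n + 1 + N = n + N + 1 by omega]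
          exact ihB
        refine ⟨hfst, ?_⟩
        rw [show n + 1 + N + 1 = (n + N) + 2 by omega]
        obtain ⟨c1, hc1⟩ := hrecγ (n + N)
        obtain ⟨c2, hc2⟩ := hrecγ n
        have hga : g (n + N + 1) = g (n + 1) := by
          rw [show n + N + 1 = (n + 1) + N by omega, hgper]
        have hgb : g (n + N + 2) = g (n + 2) := by
          rw [show n + N + 2 = (n + 2) + N by omega, hgper]
        rw [hga, ihA] at hc1
        have hyN : PM (γ (n + N + 2)) (A.label (g (n + 2))) := by
          have := hPMγ (n + N + 2)
          rwa [hgb] at this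
        exact lift_unique (hindk n) hyN (hPMγ (n+2)) ⟨c1, hc1⟩ ⟨c2, hc2⟩
  -- assemble
  refine ⟨γ, fun k => (hper2 k).1, hPMγ, ?_, fun k => ⟨ℓ k, hQC k⟩⟩
  intro k
  obtain ⟨cc, hcc⟩ := hrecγ k
  obtain ⟨s, hs, hlab⟩ := (hPMγ (k+1)).symm.exists_sign
  refine ⟨cc * s, ?_⟩
  rw [hcc, hlab, smul_smul]

end Main

/-- Every complex 2-face of a GKM₃ graph with a quaternionic structure admits a signed
structure compatible with the quaternionic structure. -/
theorem complex_face_signed_structure (G : Graph) {m : ℕ} (A : Axial G m)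
    (h₃ : A.IsGKM 3) (Q : QuatStructure G A)
    (C : Connection G) (hC : CompatibleConn G A.label C)
    (e f : G.E) (hf : G.src f = G.src e) (hef : f ≠ e)
    (N : ℕ) (hN : MinPeriod (connPath G C e f) N)
    (hcx : ¬ IsQuatPath G Q (connPath G C e f)) :
    ∃ γ : ℕ → (Fin m → ℤ), SignedStructureOn G A Q (connPath G C e f) N γ := by
  classical
  obtain ⟨C', hC', hqc, hcond⟩ := Q.cond₂
  have hgeq : connPath G C e f = connPath G C' e f :=
    funext (connPath_congr G A h₃ hC hC' hf)
  rw [hgeq] at hN hcx ⊢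
  have hcx0 : Q.qpair (connPath G C' e f 1) ≠ G.bar (connPath G C' e f 0) := by
    intro h0
    apply hcx
    intro k
    induction k with
    | zero => exact h0
    | succ n ih => exact quat_prop G A Q hqc hf n ih
  exact signed_aux G A h₃ Q C' hC' hcond (connPath G C' e f) N hN.1.2
    (connPath_src G C' hf) (connPath_ne_bar G C' hf hef) (fun k => rfl)
    ⟨f, hf, rfl⟩ hcx0


end GKMQ
end
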